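/- For every odd q ≥ 3 and every r ≥ 1, there exists a simple bipartite planar graph in which one part has qr vertices all of degree 2 and the other part has q vertices all of degree 2r. -/

import Mathlib

/-- A topological plane embedding (drawing) of a simple graph: vertices are points
of the plane, edges are injective continuous arcs meeting only at common endpoints. -/
structure PlaneEmb {V : Type} (G : SimpleGraph V) where
  pos : V → ℝ × ℝ
  pos_inj : Function.Injective pos
  arc : ∀ ⦃u v : V⦄, G.Adj u v → unitInterval → ℝ × ℝ
  arc_cont : ∀ ⦃u v : V⦄ (h : G.Adj u v), Continuous (arc h)
  arc_inj : ∀ ⦃u v : V⦄ (h : G.Adj u v), Function.Injective (arc h)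
  arc_zero : ∀ ⦃u v : V⦄ (h : G.Adj u v), arc h 0 = pos u
  arc_one : ∀ ⦃u v : V⦄ (h : G.Adj u v), arc h 1 = pos v
  arc_symm : ∀ ⦃u v : V⦄ (h : G.Adj u v) (t : unitInterval),
    arc h.symm (unitInterval.symm t) = arc h t
  arc_vertex : ∀ ⦃u v : V⦄ (h : G.Adj u v) (t : unitInterval),
    (∃ w, arc h t = pos w) → t = 0 ∨ t = 1
  arc_disj : ∀ ⦃u v x y : V⦄ (h : G.Adj u v) (h' : G.Adj x y),
    s(u, v) ≠ s(x, y) → ∀ t₁ t₂ : unitInterval, arc h t₁ = arc h' t₂ → ∃ w, arc h t₁ = pos w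

/-- The pair `(a^p | b^q)` is planar graphic: there is a simple bipartite planar graph
one of whose parts has `p` vertices, all of degree `a`, and the other part has `q`
vertices, all of degree `b`. -/
def PlanarPair (a p b q : ℕ) : Prop :=
  ∃ (V : Type) (_ : Finite V) (G : SimpleGraph V) (A B : Set V),
    Disjoint A B ∧ A ∪ B = Set.univ ∧ A.ncard = p ∧ B.ncard = q ∧
    (∀ ⦃u v⦄, G.Adj u v → ((u ∈ A ∧ v ∈ B) ∨ (u ∈ B ∧ v ∈ A))) ∧
    (∀ v ∈ A, (G.neighborSet v).ncard = a) ∧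
    (∀ v ∈ B, (G.neighborSet v).ncard = b) ∧
    Nonempty (PlaneEmb G)


namespace PX
variable (q r : ℕ) [NeZero q]

abbrev V := Fin q ⊕ Fin q × Fin r

def G : SimpleGraph (V q r) where
  Adj u v := match u, v with
    | .inl b, .inr p => b = p.1 ∨ b = p.1 + 1
    | .inr p, .inl b => b = p.1 ∨ b = p.1 + 1
    | _, _ => False
  symm := ⟨by rintro (b|p) (b'|p') h <;> exact h⟩
  loopless := ⟨by rintro (b|p) h <;> exact h⟩

lemma adj_lr (b : Fin q) (p : Fin q × Fin r) : (G q r).Adj (.inl b) (.inr p) ↔ (b = p.1 ∨ b = p.1 + 1) := Iff.rfl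
lemma adj_rl (b : Fin q) (p : Fin q × Fin r) : (G q r).Adj (.inr p) (.inl b) ↔ (b = p.1 ∨ b = p.1 + 1) := Iff.rfl
lemma adj_ll (b b' : Fin q) : ¬ (G q r).Adj (.inl b) (.inl b') := fun h => h
lemma adj_rr (p p' : Fin q × Fin r) : ¬ (G q r).Adj (.inr p) (.inr p') := fun h => h

noncomputable def pos : V q r → ℝ × ℝ
  | .inl b => ((b : ℝ), 0)
  | .inr p => if (p.1 : ℕ) = q - 1 then (((q:ℝ) - 1)/2, -((p.2:ℝ)+1)) else ((p.1:ℝ) + 1/2, (p.2:ℝ)+1)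

variable {q r}

lemma val_succ (hq : 3 ≤ q) (i : Fin q) : ((i + 1 : Fin q) : ℕ) = if (i:ℕ) = q - 1 then 0 else (i:ℕ) + 1 := by
  have h1 : ((1 : Fin q) : ℕ) = 1 % q := Fin.val_one' q
  have h2 : ((i + 1 : Fin q) : ℕ) = ((i:ℕ) + ((1:Fin q):ℕ)) % q := Fin.val_add i 1
  have h3 := i.is_lt
  rw [h2, h1]
  have h4 : 1 % q = 1 := Nat.mod_eq_of_lt (by omega)
  rw [h4]
  rcases Nat.lt_or_ge ((i:ℕ)+1) q with h5 | h5
  · rw [Nat.mod_eq_of_lt h5]; split <;> omega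
  · have h6 : (i:ℕ) = q - 1 := by omega
    have h7 : ((i:ℕ)+1) % q = 0 := by
      have : (i:ℕ)+1 = q := by omega
      simp [this]
    rw [h7]; split <;> omega

lemma one_ne_zero' (hq : 3 ≤ q) : (1 : Fin q) ≠ 0 := by
  intro h
  have h2 := congrArg Fin.val h
  rw [Fin.val_one' q, Fin.val_zero] at h2
  have h4 : 1 % q = 1 := Nat.mod_eq_of_lt (by omega)
  omega

lemma succ_ne_self (hq : 3 ≤ q) (i : Fin q) : i + 1 ≠ i := by
  intro h
  have : (1 : Fin q) = 0 := by
    have := add_right_cancel (a := i) (b := (1:Fin q)) (c := i)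
    rw [add_comm] at h
    exact by simpa using congrArg (fun x => x - i) h
  exact one_ne_zero' hq this

lemma posr_fst (p : Fin q × Fin r) :
    (pos q r (.inr p)).1 = if (p.1 : ℕ) = q - 1 then ((q:ℝ) - 1)/2 else (p.1:ℝ) + 1/2 := by
  simp only [pos]; split <;> rfl

lemma posr_snd (p : Fin q × Fin r) :
    (pos q r (.inr p)).2 = if (p.1 : ℕ) = q - 1 then -((p.2:ℝ)+1) else (p.2:ℝ)+1 := by
  simp only [pos]; split <;> rfl

lemma posl (b : Fin q) : pos q r (.inl b) = ((b:ℝ), 0) := rfl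

lemma pos_inj (hq : 3 ≤ q) : Function.Injective (pos q r) := by
  rintro (b|⟨i,j⟩) (b'|⟨i',j'⟩) h
  · simp only [posl, Prod.mk.injEq] at h
    have : (b:ℕ) = (b':ℕ) := by exact_mod_cast h.1
    exact congrArg Sum.inl (Fin.val_injective this)
  · exfalso
    have h2 := congrArg Prod.snd h
    rw [posl] at h2; rw [posr_snd] at h2
    have hj := (j'.1 : ℝ)
    by_cases hc : (i':ℕ) = q - 1 <;> simp [hc] at h2 <;> [skip; skip]
    · have : ((j':ℕ):ℝ) ≥ 0 := by positivity
      linarith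
    · have : ((j':ℕ):ℝ) ≥ 0 := by positivity
      linarith
  · exfalso
    have h2 := congrArg Prod.snd h
    rw [posl] at h2; rw [posr_snd] at h2
    by_cases hc : (i:ℕ) = q - 1 <;> simp [hc] at h2
    · have : ((j:ℕ):ℝ) ≥ 0 := by positivity
      linarith
    · have : ((j:ℕ):ℝ) ≥ 0 := by positivity
      linarith
  · have h1 := congrArg Prod.fst h
    have h2 := congrArg Prod.snd h
    rw [posr_fst, posr_fst] at h1
    rw [posr_snd, posr_snd] at h2
    have hj : ((j:ℕ):ℝ) ≥ 0 := by positivity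
    have hj' : ((j':ℕ):ℝ) ≥ 0 := by positivity
    by_cases hc : (i:ℕ) = q - 1 <;> by_cases hc' : (i':ℕ) = q - 1
    · rw [if_pos hc, if_pos hc'] at h2
      have hjj : (j:ℕ) = (j':ℕ) := by exact_mod_cast (by linarith : ((j:ℕ):ℝ) = (j':ℕ))
      have hii : (i:ℕ) = (i':ℕ) := by omega
      exact congrArg Sum.inr (Prod.ext (Fin.val_injective hii) (Fin.val_injective hjj))
    · rw [if_pos hc, if_neg hc'] at h2; linarith
    · rw [if_neg hc, if_pos hc'] at h2; linarith
    · rw [if_neg hc, if_neg hc'] at h1 h2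
      have hjj : (j:ℕ) = (j':ℕ) := by exact_mod_cast (by linarith : ((j:ℕ):ℝ) = (j':ℕ))
      have hii : (i:ℕ) = (i':ℕ) := by exact_mod_cast (by linarith : ((i:ℕ):ℝ) = (i':ℕ))
      exact congrArg Sum.inr (Prod.ext (Fin.val_injective hii) (Fin.val_injective hjj))

lemma arc_pt (u v : V q r) (t : ℝ) :
    pos q r u + t • (pos q r v - pos q r u) =
      ((pos q r u).1 + t*((pos q r v).1 - (pos q r u).1),
       (pos q r u).2 + t*((pos q r v).2 - (pos q r u).2)) := by
  ext <;> simp [smul_eq_mul]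

lemma posl_fst (b : Fin q) : (pos q r (.inl b)).1 = (b:ℝ) := rfl
lemma posl_snd (b : Fin q) : (pos q r (.inl b)).2 = 0 := rfl

lemma qR (hq : 3 ≤ q) : (3:ℝ) ≤ (q:ℝ) := by exact_mod_cast hq

lemma keyV (hq : 3 ≤ q) (b i : Fin q) (j : Fin r) (hbi : b = i ∨ b = i + 1)
    (t : ℝ) (ht0 : 0 ≤ t) (ht1 : t ≤ 1) (w : V q r)
    (heq : pos q r (.inl b) + t • (pos q r (.inr (i,j)) - pos q r (.inl b)) = pos q r w) :
    t = 0 ∨ t = 1 := by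
  rw [arc_pt] at heq
  rw [Prod.ext_iff] at heq
  obtain ⟨e1, e2⟩ := heq
  simp only [posl_fst, posl_snd, posr_fst, posr_snd] at e1 e2
  have hq3 := qR (q := q) hq
  have hjn : (0:ℝ) ≤ ((j:ℕ):ℝ) := by positivity
  by_cases hi : (i:ℕ) = q - 1
  · rw [if_pos hi] at e1 e2
    -- lower edge
    rcases w with k | ⟨i', j'⟩
    · left
      rw [posl_snd] at e2
      have h5 : t * (((j:ℕ):ℝ) + 1) = 0 := by linear_combination -e2
      rcases mul_eq_zero.mp h5 with h | h
      · exact h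
      · linarith
    · rw [posr_fst] at e1; rw [posr_snd] at e2
      by_cases hi' : (i':ℕ) = q - 1
      · right
        rw [if_pos hi'] at e1
        -- x equation forces t = 1
        have hbv : ((b:ℕ):ℝ) = (q:ℝ) - 1 ∨ ((b:ℕ):ℝ) = 0 := by
          rcases hbi with h | h
          · left; rw [h, hi, Nat.cast_sub (by omega : 1 ≤ q)]; norm_num
          · right; rw [h, val_succ hq, if_pos hi]; norm_num
        rcases hbv with hb | hb <;> rw [hb] at e1
        · have h5 : (t - 1) * (((q:ℝ) - 1) / 2) = 0 := by linear_combination -e1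
          rcases mul_eq_zero.mp h5 with h | h
          · linarith
          · linarith
        · have h5 : (t - 1) * (((q:ℝ) - 1) / 2) = 0 := by linear_combination e1
          rcases mul_eq_zero.mp h5 with h | h
          · linarith
          · linarith
      · exfalso
        rw [if_neg hi'] at e2
        have hj' : (0:ℝ) ≤ ((j':ℕ):ℝ) := by positivity
        have h5 : t * (((j:ℕ):ℝ) + 1) ≥ 0 := mul_nonneg ht0 (by linarith)
        have h6 : (0:ℝ) + t * (-(((j:ℕ):ℝ) + 1) - 0) ≤ 0 := by nlinarith
        linarith [e2, h6]
  · rw [if_neg hi] at e1 e2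
    -- upper edge
    rcases w with k | ⟨i', j'⟩
    · left
      rw [posl_snd] at e2
      have h5 : t * (((j:ℕ):ℝ) + 1) = 0 := by linear_combination e2
      rcases mul_eq_zero.mp h5 with h | h
      · exact h
      · linarith
    · rw [posr_fst] at e1; rw [posr_snd] at e2
      by_cases hi' : (i':ℕ) = q - 1
      · exfalso
        rw [if_pos hi'] at e2
        have hj' : (0:ℝ) ≤ ((j':ℕ):ℝ) := by positivity
        have h5 : t * (((j:ℕ):ℝ) + 1) ≥ 0 := mul_nonneg ht0 (by linarith)
        nlinarith [e2]
      · right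
        rw [if_neg hi'] at e1
        -- both upper : first show i' = i
        have hbv : ((b:ℕ):ℝ) = ((i:ℕ):ℝ) ∨ ((b:ℕ):ℝ) = ((i:ℕ):ℝ) + 1 := by
          rcases hbi with h | h
          · left; rw [h]
          · right; rw [h, val_succ hq, if_neg hi]; push_cast; ring
        have hx1 : ((i:ℕ):ℝ) ≤ ((i':ℕ):ℝ) + 1/2 := by
          rcases hbv with hb | hb <;> rw [hb] at e1 <;> nlinarith
        have hx2 : ((i':ℕ):ℝ) + 1/2 ≤ ((i:ℕ):ℝ) + 1 := by
          rcases hbv with hb | hb <;> rw [hb] at e1 <;> nlinarith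
        have hii : (i':ℕ) = (i:ℕ) := by
          have c1 : ((i':ℕ):ℝ) < ((i:ℕ):ℝ) + 1 := by linarith
          have c2 : ((i:ℕ):ℝ) < ((i':ℕ):ℝ) + 1 := by linarith
          have d1 : (i':ℕ) < (i:ℕ) + 1 := by exact_mod_cast c1
          have d2 : (i:ℕ) < (i':ℕ) + 1 := by exact_mod_cast c2
          omega
        rw [hii] at e1
        rcases hbv with hb | hb <;> rw [hb] at e1
        · have h5 : (t - 1) * (1/2 : ℝ) = 0 := by linear_combination e1
          rcases mul_eq_zero.mp h5 with h | h
          · linarith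
          · norm_num at h
        · have h5 : (t - 1) * (1/2 : ℝ) = 0 := by linear_combination -e1
          rcases mul_eq_zero.mp h5 with h | h
          · linarith
          · norm_num at h

lemma pt_zero (u v : V q r) : pos q r u + (0:ℝ) • (pos q r v - pos q r u) = pos q r u := by
  simp

lemma pt_one (u v : V q r) : pos q r u + (1:ℝ) • (pos q r v - pos q r u) = pos q r v := by
  simp

lemma fin_cast_ne {n : ℕ} {a b : Fin n} (h : a ≠ b) : ((a:ℕ):ℝ) ≠ ((b:ℕ):ℝ) := by
  intro hc
  exact h (Fin.val_injective (by exact_mod_cast hc))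

lemma keyD (hq : 3 ≤ q) (b i : Fin q) (j : Fin r) (b' i' : Fin q) (j' : Fin r)
    (hbi : b = i ∨ b = i + 1) (hbi' : b' = i' ∨ b' = i' + 1)
    (hne : ¬(b = b' ∧ i = i' ∧ j = j'))
    (t s : ℝ) (ht0 : 0 ≤ t) (ht1 : t ≤ 1) (hs0 : 0 ≤ s) (hs1 : s ≤ 1)
    (heq : pos q r (.inl b) + t • (pos q r (.inr (i,j)) - pos q r (.inl b)) =
           pos q r (.inl b') + s • (pos q r (.inr (i',j')) - pos q r (.inl b'))) :
    ∃ w, pos q r (.inl b) + t • (pos q r (.inr (i,j)) - pos q r (.inl b)) = pos q r w := by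
  have heq0 := heq
  rw [arc_pt, arc_pt] at heq
  rw [Prod.ext_iff] at heq
  obtain ⟨e1, e2⟩ := heq
  simp only [posl_fst, posl_snd, posr_fst, posr_snd] at e1 e2
  have hq3 := qR (q := q) hq
  have hjn : (0:ℝ) ≤ ((j:ℕ):ℝ) := by positivity
  have hjn' : (0:ℝ) ≤ ((j':ℕ):ℝ) := by positivity
  -- helper conclusions
  have conc0 : t = 0 → ∃ w, pos q r (.inl b) + t • (pos q r (.inr (i,j)) - pos q r (.inl b)) = pos q r w := by
    intro h; exact ⟨.inl b, by rw [h]; exact pt_zero _ _⟩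
  have conc1 : t = 1 → ∃ w, pos q r (.inl b) + t • (pos q r (.inr (i,j)) - pos q r (.inl b)) = pos q r w := by
    intro h; exact ⟨.inr (i,j), by rw [h]; exact pt_one _ _⟩
  have conc0' : s = 0 → ∃ w, pos q r (.inl b) + t • (pos q r (.inr (i,j)) - pos q r (.inl b)) = pos q r w := by
    intro h; refine ⟨.inl b', ?_⟩
    rw [heq0, h]; exact pt_zero _ _
  by_cases hi : (i:ℕ) = q - 1 <;> by_cases hi' : (i':ℕ) = q - 1
  · -- both lower
    rw [if_pos hi] at e1 e2
    rw [if_pos hi'] at e1 e2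
    have hii : i = i' := Fin.val_injective (hi.trans hi'.symm)
    have hbv : ((b:ℕ):ℝ) = (q:ℝ) - 1 ∨ ((b:ℕ):ℝ) = 0 := by
      rcases hbi with h | h
      · left; rw [h, hi, Nat.cast_sub (by omega : 1 ≤ q)]; norm_num
      · right; rw [h, val_succ hq, if_pos hi]; norm_num
    have hbv' : ((b':ℕ):ℝ) = (q:ℝ) - 1 ∨ ((b':ℕ):ℝ) = 0 := by
      rcases hbi' with h | h
      · left; rw [h, hi', Nat.cast_sub (by omega : 1 ≤ q)]; norm_num
      · right; rw [h, val_succ hq, if_pos hi']; norm_num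
    by_cases hbb : ((b:ℕ):ℝ) = ((b':ℕ):ℝ)
    · -- same base vertex, so j ≠ j'
      have hbeq : b = b' := Fin.val_injective (by exact_mod_cast hbb)
      have hjj : j ≠ j' := fun h => hne ⟨hbeq, hii, h⟩
      rw [← hbb] at e1
      have hMB : ((q:ℝ) - 1)/2 - ((b:ℕ):ℝ) ≠ 0 := by
        rcases hbv with h | h <;> rw [h] <;> intro hc <;> linarith
      have h5 : (t - s) * (((q:ℝ) - 1)/2 - ((b:ℕ):ℝ)) = 0 := by linear_combination e1
      have hts : t = s := by
        rcases mul_eq_zero.mp h5 with h | h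
        · linarith
        · exact absurd h hMB
      rw [← hts] at e2
      have h6 : t * (((j':ℕ):ℝ) - ((j:ℕ):ℝ)) = 0 := by linear_combination e2
      rcases mul_eq_zero.mp h6 with h | h
      · exact conc0 h
      · exact absurd (Fin.val_injective (show (j:ℕ) = (j':ℕ) by exact_mod_cast (by linarith : ((j:ℕ):ℝ) = ((j':ℕ):ℝ)))) hjj
    · -- opposite bases, force t = s = 1
      apply conc1
      rcases hbv with hb | hb <;> rcases hbv' with hb' | hb' <;>
        rw [hb, hb'] at e1
      · exact absurd (hb.trans hb'.symm) hbb
      · have h5 : ((q:ℝ) - 1) * (2 - t - s) = 0 := by linear_combination 2 * e1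
        rcases mul_eq_zero.mp h5 with h | h
        · linarith
        · linarith
      · have h5 : ((q:ℝ) - 1) * (2 - t - s) = 0 := by linear_combination -2 * e1
        rcases mul_eq_zero.mp h5 with h | h
        · linarith
        · linarith
      · exact absurd (hb.trans hb'.symm) hbb
  · -- i lower, i' upper : y-signs
    rw [if_pos hi] at e1 e2
    rw [if_neg hi'] at e1 e2
    apply conc0
    have h5 : t * (((j:ℕ):ℝ) + 1) = - (s * (((j':ℕ):ℝ) + 1)) := by linear_combination -e2
    have h6 : (0:ℝ) ≤ t * (((j:ℕ):ℝ) + 1) := mul_nonneg ht0 (by linarith)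
    have h7 : (0:ℝ) ≤ s * (((j':ℕ):ℝ) + 1) := mul_nonneg hs0 (by linarith)
    have h8 : t * (((j:ℕ):ℝ) + 1) = 0 := by linarith
    rcases mul_eq_zero.mp h8 with h | h
    · exact h
    · linarith
  · -- i upper, i' lower
    rw [if_neg hi] at e1 e2
    rw [if_pos hi'] at e1 e2
    apply conc0
    have h5 : t * (((j:ℕ):ℝ) + 1) = - (s * (((j':ℕ):ℝ) + 1)) := by linear_combination e2
    have h6 : (0:ℝ) ≤ t * (((j:ℕ):ℝ) + 1) := mul_nonneg ht0 (by linarith)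
    have h7 : (0:ℝ) ≤ s * (((j':ℕ):ℝ) + 1) := mul_nonneg hs0 (by linarith)
    have h8 : t * (((j:ℕ):ℝ) + 1) = 0 := by linarith
    rcases mul_eq_zero.mp h8 with h | h
    · exact h
    · linarith
  · -- both upper
    rw [if_neg hi] at e1 e2
    rw [if_neg hi'] at e1 e2
    have hbv : ((b:ℕ):ℝ) = ((i:ℕ):ℝ) ∨ ((b:ℕ):ℝ) = ((i:ℕ):ℝ) + 1 := by
      rcases hbi with h | h
      · left; rw [h]
      · right; rw [h, val_succ hq, if_neg hi]; push_cast; ring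
    have hbv' : ((b':ℕ):ℝ) = ((i':ℕ):ℝ) ∨ ((b':ℕ):ℝ) = ((i':ℕ):ℝ) + 1 := by
      rcases hbi' with h | h
      · left; rw [h]
      · right; rw [h, val_succ hq, if_neg hi']; push_cast; ring
    rcases Nat.lt_trichotomy (i:ℕ) (i':ℕ) with hlt | heqi | hgt
    · -- i < i' : strips separated
      have hle : ((i:ℕ):ℝ) + 1 ≤ ((i':ℕ):ℝ) := by exact_mod_cast Nat.succ_le_of_lt hlt
      have hx2 : ((i':ℕ):ℝ) ≤ ((b':ℕ):ℝ) + s * ((((i':ℕ):ℝ) + 1/2) - ((b':ℕ):ℝ)) := by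
        rcases hbv' with h | h <;> rw [h] <;> linarith
      rcases hbv with hb | hb <;> rw [hb] at e1
      · exfalso
        linarith [e1, hx2, hle]
      · apply conc0
        have h5 : t * (1/2 : ℝ) ≤ 0 := by linarith [e1, hx2, hle]
        linarith
    · -- same strip
      have hieq : i = i' := Fin.val_injective heqi
      have hR : ((i':ℕ):ℝ) = ((i:ℕ):ℝ) := by rw [heqi]
      rw [hR] at e1
      rw [hR] at hbv'
      by_cases hbb : ((b:ℕ):ℝ) = ((b':ℕ):ℝ)
      · have hbeq : b = b' := Fin.val_injective (by exact_mod_cast hbb)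
        have hjj : j ≠ j' := fun h => hne ⟨hbeq, hieq, h⟩
        rw [← hbb] at e1
        have hMB : (((i:ℕ):ℝ) + 1/2) - ((b:ℕ):ℝ) ≠ 0 := by
          rcases hbv with h | h <;> rw [h] <;> intro hc <;> linarith
        have h5 : (t - s) * ((((i:ℕ):ℝ) + 1/2) - ((b:ℕ):ℝ)) = 0 := by linear_combination e1
        have hts : t = s := by
          rcases mul_eq_zero.mp h5 with h | h
          · linarith
          · exact absurd h hMB
        rw [← hts] at e2
        have h6 : t * (((j':ℕ):ℝ) - ((j:ℕ):ℝ)) = 0 := by linear_combination -e2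
        rcases mul_eq_zero.mp h6 with h | h
        · exact conc0 h
        · exact absurd (Fin.val_injective (show (j:ℕ) = (j':ℕ) by exact_mod_cast (by linarith : ((j:ℕ):ℝ) = ((j':ℕ):ℝ)))) hjj
      · apply conc1
        rcases hbv with hb | hb <;> rcases hbv' with hb' | hb' <;> rw [hb, hb'] at e1
        · exact absurd (hb.trans hb'.symm) hbb
        · have h5 : (2 - t - s) * (1/2 : ℝ) = 0 := by linear_combination -e1
          rcases mul_eq_zero.mp h5 with h | h
          · linarith
          · norm_num at h
        · have h5 : (2 - t - s) * (1/2 : ℝ) = 0 := by linear_combination e1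
          rcases mul_eq_zero.mp h5 with h | h
          · linarith
          · norm_num at h
        · exact absurd (hb.trans hb'.symm) hbb
    · -- i > i'
      have hle : ((i':ℕ):ℝ) + 1 ≤ ((i:ℕ):ℝ) := by exact_mod_cast Nat.succ_le_of_lt hgt
      have hx1 : ((i:ℕ):ℝ) ≤ ((b:ℕ):ℝ) + t * ((((i:ℕ):ℝ) + 1/2) - ((b:ℕ):ℝ)) := by
        rcases hbv with h | h <;> rw [h] <;> linarith
      rcases hbv' with hb' | hb' <;> rw [hb'] at e1
      · exfalso
        linarith [e1, hx1, hle]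
      · apply conc0'
        have h5 : s * (1/2 : ℝ) ≤ 0 := by linarith [e1, hx1, hle]
        linarith

lemma sub_one_ne_self (hq : 3 ≤ q) (b : Fin q) : b - 1 ≠ b := by
  intro h
  exact one_ne_zero' hq (by rwa [sub_eq_self] at h)

lemma nbhd_inr (hq : 3 ≤ q) (p : Fin q × Fin r) :
    (G q r).neighborSet (.inr p) = {Sum.inl p.1, Sum.inl (p.1 + 1)} := by
  ext v
  rcases v with b | p'
  · simp only [SimpleGraph.mem_neighborSet, Set.mem_insert_iff, Set.mem_singleton_iff]
    rw [adj_rl]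
    constructor
    · rintro (h | h)
      · exact Or.inl (congrArg Sum.inl h)
      · exact Or.inr (congrArg Sum.inl h)
    · rintro (h | h) <;> injection h with h
      · exact Or.inl h
      · exact Or.inr h
  · simp only [SimpleGraph.mem_neighborSet, Set.mem_insert_iff, Set.mem_singleton_iff]
    constructor
    · intro h; exact absurd h (adj_rr q r p p')
    · rintro (h | h) <;> exact absurd h (by simp)

lemma card_nbhd_inr (hq : 3 ≤ q) (p : Fin q × Fin r) :
    ((G q r).neighborSet (.inr p)).ncard = 2 := by
  rw [nbhd_inr hq]
  rw [Set.ncard_pair]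
  intro h
  injection h with h
  exact succ_ne_self hq p.1 h.symm

lemma nbhd_inl (hq : 3 ≤ q) (b : Fin q) :
    (G q r).neighborSet (.inl b) =
      (fun j : Fin r => Sum.inr (α := Fin q) (b, j)) '' Set.univ ∪
      (fun j : Fin r => Sum.inr (α := Fin q) (b - 1, j)) '' Set.univ := by
  ext v
  rcases v with b' | ⟨i, j⟩
  · simp [SimpleGraph.mem_neighborSet, adj_ll]
  · simp only [SimpleGraph.mem_neighborSet, Set.mem_union, Set.mem_image, Set.mem_univ,
      true_and]
    rw [adj_lr]
    constructor
    · rintro (h | h)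
      · exact Or.inl ⟨j, by rw [h]⟩
      · refine Or.inr ⟨j, ?_⟩
        have : b - 1 = i := by rw [sub_eq_iff_eq_add, ← h]
        rw [this]
    · rintro (⟨j', h⟩ | ⟨j', h⟩)
      · injection h with h; rw [(Prod.mk.injEq _ _ _ _).mp h |>.1]; exact Or.inl rfl
      · injection h with h
        obtain ⟨h1, h2⟩ := (Prod.mk.injEq _ _ _ _).mp h
        right; rw [← h1, sub_add_cancel]

lemma card_nbhd_inl (hq : 3 ≤ q) (b : Fin q) :
    ((G q r).neighborSet (.inl b)).ncard = 2 * r := by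
  rw [nbhd_inl hq]
  have hinj1 : Function.Injective (fun j : Fin r => Sum.inr (α := Fin q) (b, j)) := by
    intro a c h; injection h with h; exact ((Prod.mk.injEq _ _ _ _).mp h).2
  have hinj2 : Function.Injective (fun j : Fin r => Sum.inr (α := Fin q) (b - 1, j)) := by
    intro a c h; injection h with h; exact ((Prod.mk.injEq _ _ _ _).mp h).2
  have hdisj : Disjoint ((fun j : Fin r => Sum.inr (α := Fin q) (b, j)) '' Set.univ)
      ((fun j : Fin r => Sum.inr (α := Fin q) (b - 1, j)) '' Set.univ) := by
    rw [Set.disjoint_left]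
    rintro v ⟨j1, -, h1⟩ ⟨j2, -, h2⟩
    rw [← h1] at h2
    injection h2 with h2
    obtain ⟨h3, -⟩ := (Prod.mk.injEq _ _ _ _).mp h2
    exact sub_one_ne_self hq b h3
  rw [Set.ncard_union_eq hdisj (Set.toFinite _) (Set.toFinite _),
    Set.ncard_image_of_injective _ hinj1, Set.ncard_image_of_injective _ hinj2,
    Set.ncard_univ]
  simp [Nat.card_eq_fintype_card]
  ring

lemma flip_pt (x y : ℝ × ℝ) (t : ℝ) : x + t • (y - x) = y + (1 - t) • (x - y) := by module

noncomputable def emb (hq : 3 ≤ q) : PlaneEmb (G q r) where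
  pos := pos q r
  pos_inj := pos_inj hq
  arc := fun u v _ t => pos q r u + (t : ℝ) • (pos q r v - pos q r u)
  arc_cont := fun u v _ =>
    continuous_const.add ((continuous_subtype_val).smul continuous_const)
  arc_inj := by
    intro u v h t1 t2 hEq
    have hd : pos q r v - pos q r u ≠ 0 := by
      rw [sub_ne_zero]
      exact fun hc => h.ne (pos_inj hq hc).symm
    have h2 : ((t1 : ℝ) - (t2 : ℝ)) • (pos q r v - pos q r u) = 0 := by
      rw [sub_smul]
      rw [sub_eq_zero]
      exact add_left_cancel hEq
    rcases smul_eq_zero.mp h2 with h3 | h3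
    · exact Subtype.ext (by linarith [sub_eq_zero.mp (by exact_mod_cast h3)])
    · exact absurd h3 hd
  arc_zero := by intro u v h; simp
  arc_one := by intro u v h; simp
  arc_symm := by
    intro u v h t
    rw [unitInterval.coe_symm_eq]
    exact (flip_pt _ _ _).symm
  arc_vertex := by
    intro u v h t hw
    obtain ⟨w, hw⟩ := hw
    rcases u with b | ⟨i, j⟩ <;> rcases v with b' | ⟨i', j'⟩
    · exact absurd h (adj_ll q r b b')
    · have hbi := (adj_lr q r b (i', j')).mp h
      rcases keyV hq b i' j' hbi (t : ℝ) t.2.1 t.2.2 w hw with h0 | h1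
      · exact Or.inl (Subtype.ext (by simpa using h0))
      · exact Or.inr (Subtype.ext (by simpa using h1))
    · have hbi := (adj_rl q r b' (i, j)).mp h
      rw [flip_pt] at hw
      rcases keyV hq b' i j hbi (1 - (t : ℝ)) (by linarith [t.2.2]) (by linarith [t.2.1]) w hw with h0 | h1
      · exact Or.inr (Subtype.ext (by simpa using (by linarith : (t:ℝ) = 1)))
      · exact Or.inl (Subtype.ext (by simpa using (by linarith : (t:ℝ) = 0)))
    · exact absurd h (adj_rr q r (i, j) (i', j'))
  arc_disj := by
    intro u v x y h h' hne t1 t2 heq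
    rcases u with b | ⟨i, j⟩ <;> rcases v with b' | ⟨i', j'⟩
    · exact absurd h (adj_ll q r b b')
    · -- first edge inl-inr
      have hbi := (adj_lr q r b (i', j')).mp h
      rcases x with c | ⟨k, l⟩ <;> rcases y with c' | ⟨k', l'⟩
      · exact absurd h' (adj_ll q r c c')
      · have hbi' := (adj_lr q r c (k', l')).mp h'
        refine keyD hq b i' j' c k' l' hbi hbi' ?_ (t1:ℝ) (t2:ℝ) t1.2.1 t1.2.2 t2.2.1 t2.2.2 heq
        rintro ⟨rfl, rfl, rfl⟩
        exact hne rfl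
      · have hbi' := (adj_rl q r c' (k, l)).mp h'
        rw [show pos q r (Sum.inr (k, l)) + (t2:ℝ) • (pos q r (Sum.inl c') - pos q r (Sum.inr (k, l))) =
            pos q r (Sum.inl c') + (1 - (t2:ℝ)) • (pos q r (Sum.inr (k, l)) - pos q r (Sum.inl c')) from flip_pt _ _ _] at heq
        refine keyD hq b i' j' c' k l hbi hbi' ?_ (t1:ℝ) (1 - (t2:ℝ)) t1.2.1 t1.2.2
          (by linarith [t2.2.2]) (by linarith [t2.2.1]) heq
        rintro ⟨rfl, rfl, rfl⟩
        exact hne (Sym2.eq_swap)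
      · exact absurd h' (adj_rr q r (k, l) (k', l'))
    · -- first edge inr-inl
      have hbi := (adj_rl q r b' (i, j)).mp h
      rw [flip_pt] at heq ⊢
      rcases x with c | ⟨k, l⟩ <;> rcases y with c' | ⟨k', l'⟩
      · exact absurd h' (adj_ll q r c c')
      · have hbi' := (adj_lr q r c (k', l')).mp h'
        refine keyD hq b' i j c k' l' hbi hbi' ?_ (1 - (t1:ℝ)) (t2:ℝ)
          (by linarith [t1.2.2]) (by linarith [t1.2.1]) t2.2.1 t2.2.2 heq
        rintro ⟨rfl, rfl, rfl⟩
        exact hne (Sym2.eq_swap)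
      · have hbi' := (adj_rl q r c' (k, l)).mp h'
        rw [show pos q r (Sum.inr (k, l)) + (t2:ℝ) • (pos q r (Sum.inl c') - pos q r (Sum.inr (k, l))) =
            pos q r (Sum.inl c') + (1 - (t2:ℝ)) • (pos q r (Sum.inr (k, l)) - pos q r (Sum.inl c')) from flip_pt _ _ _] at heq
        refine keyD hq b' i j c' k l hbi hbi' ?_ (1 - (t1:ℝ)) (1 - (t2:ℝ))
          (by linarith [t1.2.2]) (by linarith [t1.2.1]) (by linarith [t2.2.2]) (by linarith [t2.2.1]) heq
        rintro ⟨rfl, rfl, rfl⟩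
        exact hne rfl
      · exact absurd h' (adj_rr q r (k, l) (k', l'))
    · exact absurd h (adj_rr q r (i, j) (i', j'))

end PX

theorem planar_two_odd (q r : ℕ) (hq : Odd q) (hq3 : 3 ≤ q) (hr : 1 ≤ r) :
    PlanarPair 2 (q * r) (2 * r) q := by
  haveI : NeZero q := ⟨by omega⟩
  refine ⟨PX.V q r, inferInstance, PX.G q r, Set.range Sum.inr, Set.range Sum.inl,
    ?_, ?_, ?_, ?_, ?_, ?_, ?_, ⟨PX.emb hq3⟩⟩
  · rw [Set.disjoint_left]
    rintro v ⟨a, rfl⟩ ⟨b, hb⟩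
    exact Sum.inl_ne_inr hb
  · ext v
    rcases v with b | p <;> simp
  · rw [← Set.image_univ, Set.ncard_image_of_injective _ Sum.inr_injective, Set.ncard_univ]
    simp [Nat.card_eq_fintype_card]
  · rw [← Set.image_univ, Set.ncard_image_of_injective _ Sum.inl_injective, Set.ncard_univ]
    simp [Nat.card_eq_fintype_card]
  · rintro u v h
    rcases u with b | p <;> rcases v with b' | p'
    · exact absurd h (PX.adj_ll q r b b')
    · exact Or.inr ⟨Set.mem_range_self b, Set.mem_range_self p'⟩
    · exact Or.inl ⟨Set.mem_range_self p, Set.mem_range_self b'⟩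
    · exact absurd h (PX.adj_rr q r p p')
  · rintro v ⟨p, rfl⟩
    exact PX.card_nbhd_inr hq3 p
  · rintro v ⟨b, rfl⟩
    exact PX.card_nbhd_inl hq3 b
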